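/- In case (3) of the map φ, where n_1 = ∅ but some n_i with i ≥ 2 is nonempty: letting m be the final maximal run of north steps of Q minus one step, and Q' the path Q with n_0 and Q_1 erased, the path φ(D) = P Q_1 m Q' n_0 R is a Dyck path of the same semilength with returns(φ(D)) = returns(D) + 1 and ldr(φ(D)) = ldr(D) + 1. -/

import Mathlib

/-!
Dyck paths are encoded as lists of booleans: `true` is a north step `(0,1)`,
`false` is an east step `(1,0)`.  A Dyck path of semilength `n` goes from
`(0,0)` to `(n,n)` staying weakly above the diagonal `y = x`.
-/

/-- `D` is a Dyck word: every prefix has at least as many north steps as east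
steps, and the total numbers agree. -/
def isDyck (D : List Bool) : Bool :=
  ((List.range (D.length + 1)).all fun k =>
    (D.take k).count false ≤ (D.take k).count true) &&
  (D.count true == D.count false)

/-- The (finite) set of Dyck paths of semilength `n`. -/
def dyckPaths (n : ℕ) : Finset (List Bool) :=
  ((List.replicate n true ++ List.replicate n false).permutations.filter isDyck).toFinset

/-- The number of returns: east steps ending on the diagonal `y = x`. -/
def returns (D : List Bool) : ℕ :=
  ((List.range D.length).filter fun i =>
    (D[i]? == some false) &&
    ((D.take (i + 1)).count true == (D.take (i + 1)).count false)).length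

/-- `ldr D`: the `y`-coordinate of the midpoint of the last double rise
(last pair of consecutive north steps), `0` if there is no double rise. -/
def ldr (D : List Bool) : ℕ :=
  match ((List.range D.length).filter fun i =>
      (D[i]? == some true) && (D[i+1]? == some true)).getLast? with
  | some i => (D.take (i + 1)).count true
  | none => 0

/-- The set of `x`-coordinates (plus 1) of the north steps of `D`. -/
def rises (D : List Bool) : Finset ℕ :=
  (((List.range D.length).filter fun i => D[i]? == some true).map
    fun i => (D.take i).count false + 1).toFinset

/-- The multiset of `x`-coordinates (plus 1) of the north steps of `D`. -/
def risesM (D : List Bool) : Multiset ℕ :=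
  ↑(((List.range D.length).filter fun i => D[i]? == some true).map
    fun i => (D.take i).count false + 1)

/-- `D` ends with a single east step: its last maximal run of east steps has
length one, i.e. `D` ends with a north step followed by one east step. -/
def EndsSingleEast (D : List Bool) : Prop :=
  ∃ P, D = P ++ [true, false]

/-- `R` contains only single rises: no two consecutive north steps. -/
def SingleRises (R : List Bool) : Prop :=
  ∀ i, ¬ (R[i]? = some true ∧ R[i+1]? = some true)

/-- A prime Dyck path: a Dyck path whose only return is its final east step. -/
def IsPrimeDyck (Q : List Bool) : Prop :=
  isDyck Q = true ∧ Q ≠ [] ∧ returns Q = 1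

/-- Concatenation `n₀ Q₁ n₁ Q₂ ⋯` of runs of north steps and paths, encoded as a
list of pairs `(nᵢ₋₁, Qᵢ)`. -/
def primeBlocks (l : List (ℕ × List Bool)) : List Bool :=
  (l.map fun p => List.replicate p.1 true ++ p.2).flatten

namespace StmtAux

def hgt (X : List Bool) : ℤ := (X.count true : ℤ) - (X.count false : ℤ)

def above (c : ℤ) (X : List Bool) : Prop := ∀ k, 0 ≤ c + hgt (X.take k)

def retsAux (c : ℤ) (X : List Bool) : ℕ :=
  ((List.range X.length).filter fun i =>
    (X[i]? == some false) && decide (c + hgt (X.take (i+1)) = 0)).length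

@[simp] lemma hgt_nil : hgt [] = 0 := by simp [hgt]

@[simp] lemma hgt_append (A C : List Bool) : hgt (A ++ C) = hgt A + hgt C := by
  simp [hgt, List.count_append]; ring

@[simp] lemma hgt_replicate_true (m : ℕ) : hgt (List.replicate m true) = m := by
  simp [hgt, List.count_replicate]

@[simp] lemma hgt_replicate_false (m : ℕ) : hgt (List.replicate m false) = -m := by
  simp [hgt, List.count_replicate]

lemma take_append_le {A C : List Bool} {k : ℕ} (h : k ≤ A.length) :
    (A ++ C).take k = A.take k := by
  rw [List.take_append, Nat.sub_eq_zero_of_le h]; simp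

lemma take_append_ge {A C : List Bool} {k : ℕ} (h : A.length ≤ k) :
    (A ++ C).take k = A ++ C.take (k - A.length) := by
  rw [List.take_append, List.take_of_length_le h]

lemma above_append {c : ℤ} {A C : List Bool} :
    above c (A ++ C) ↔ above c A ∧ above (c + hgt A) C := by
  constructor
  · intro h
    constructor
    · intro k
      rcases le_or_gt k A.length with hk | hk
      · have := h k
        rwa [take_append_le hk] at this
      · rw [List.take_of_length_le (le_of_lt hk)]
        have := h A.length
        rwa [take_append_le le_rfl, List.take_length] at this
    · intro k
      have := h (A.length + k)
      rwa [take_append_ge (Nat.le_add_right _ _), Nat.add_sub_cancel_left,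
        hgt_append, ← add_assoc] at this
  · rintro ⟨h1, h2⟩ k
    rcases le_or_gt k A.length with hk | hk
    · rw [take_append_le hk]; exact h1 k
    · rw [take_append_ge (le_of_lt hk), hgt_append, ← add_assoc]
      exact h2 _

lemma above_mono {c c' : ℤ} (h : c ≤ c') {X : List Bool} (hX : above c X) : above c' X :=
  fun k => le_trans (hX k) (by linarith)

lemma above_replicate_true {c : ℤ} (h : 0 ≤ c) (m : ℕ) : above c (List.replicate m true) := by
  intro k
  rw [List.take_replicate, hgt_replicate_true]
  positivity

lemma above_replicate_false {c : ℤ} {m : ℕ} (h : (m : ℤ) ≤ c) :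
    above c (List.replicate m false) := by
  intro k
  rw [List.take_replicate, hgt_replicate_false]
  have : ((min k m : ℕ) : ℤ) ≤ (m:ℤ) := by exact_mod_cast min_le_right k m
  linarith

lemma isDyck_iff {X : List Bool} : isDyck X = true ↔ above 0 X ∧ hgt X = 0 := by
  rw [isDyck, Bool.and_eq_true, List.all_eq_true]
  constructor
  · rintro ⟨h1, h2⟩
    have h2' : hgt X = 0 := by
      simp only [beq_iff_eq] at h2
      simp [hgt, h2]
    refine ⟨fun k => ?_, h2'⟩
    rcases le_or_gt k X.length with hk | hk
    · have := h1 k (by rw [List.mem_range]; omega)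
      simp only [decide_eq_true_eq] at this
      simp only [hgt, zero_add]
      omega
    · rw [List.take_of_length_le (le_of_lt hk)]
      simp [h2']
  · rintro ⟨h1, h2⟩
    constructor
    · intro k _
      have := h1 k
      simp only [hgt, zero_add, decide_eq_true_eq] at this ⊢
      omega
    · simp only [beq_iff_eq]
      simp only [hgt] at h2
      omega

lemma returns_eq (X : List Bool) : returns X = retsAux 0 X := by
  unfold returns retsAux
  congr 1
  apply List.filter_congr
  intro i _
  congr 1
  rw [Bool.eq_iff_iff, beq_iff_eq, decide_eq_true_iff]
  simp only [hgt, zero_add]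
  omega

lemma retsAux_append (c : ℤ) (A C : List Bool) :
    retsAux c (A ++ C) = retsAux c A + retsAux (c + hgt A) C := by
  unfold retsAux
  rw [List.length_append, List.range_add, List.filter_append, List.length_append]
  congr 1
  · apply congrArg
    apply List.filter_congr
    intro i hi
    rw [List.mem_range] at hi
    rw [List.getElem?_append_left hi, take_append_le (by omega)]
  · rw [List.filter_map, List.length_map]
    apply congrArg
    apply List.filter_congr
    intro j hj
    rw [List.mem_range] at hj
    simp only [Function.comp_apply]
    rw [List.getElem?_append_right (Nat.le_add_right _ _), Nat.add_sub_cancel_left,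
      take_append_ge (by omega)]
    have : A.length + j + 1 - A.length = j + 1 := by omega
    rw [this, hgt_append]
    rw [← add_assoc]

lemma retsAux_eq_zero {c : ℤ} {X : List Bool}
    (h : ∀ k, 1 ≤ k → k ≤ X.length → 0 < c + hgt (X.take k)) : retsAux c X = 0 := by
  unfold retsAux
  rw [List.length_eq_zero_iff]
  rw [List.filter_eq_nil_iff]
  intro i hi
  rw [List.mem_range] at hi
  have := h (i+1) (by omega) (by omega)
  simp only [Bool.and_eq_true, decide_eq_true_eq]
  rintro ⟨-, h2⟩
  omega

lemma retsAux_replicate_true (c : ℤ) (m : ℕ) : retsAux c (List.replicate m true) = 0 := by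
  unfold retsAux
  rw [List.length_eq_zero_iff, List.filter_eq_nil_iff]
  intro i hi
  rw [List.length_replicate, List.mem_range] at hi
  simp [List.getElem?_replicate, hi]

lemma one_le_retsAux {c : ℤ} {X : List Bool} (hne : X ≠ [])
    (hlast : X.getLast? = some false) (h0 : c + hgt X = 0) : 1 ≤ retsAux c X := by
  have hlen : 1 ≤ X.length := List.length_pos_iff.mpr hne
  have hmem : (X.length - 1) ∈ (List.range X.length).filter fun i =>
      (X[i]? == some false) && decide (c + hgt (X.take (i+1)) = 0) := by
    rw [List.mem_filter, List.mem_range]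
    refine ⟨by omega, ?_⟩
    have h1 : X[X.length - 1]? = some false := by
      rw [← List.getLast?_eq_getElem?]; exact hlast
    have h2 : X.length - 1 + 1 = X.length := by omega
    rw [h1, h2, List.take_length]
    simp [h0]
  calc 1 ≤ _ := List.length_pos_iff.mpr (List.ne_nil_of_mem hmem)

lemma dyck_ends_false {X : List Bool} (h1 : above 0 X) (h2 : hgt X = 0) (hne : X ≠ []) :
    X.getLast? = some false := by
  rw [List.getLast?_eq_getLast hne]
  by_contra hcon
  have hlast : X.getLast hne = true := by
    cases h : X.getLast hne
    · exact absurd (by rw [h]) hcon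
    · rfl
  have hdec : X = X.dropLast ++ [true] := by
    conv_lhs => rw [← List.dropLast_append_getLast hne]
    rw [hlast]
  have := h1 (X.length - 1)
  rw [← List.dropLast_eq_take] at this
  have hh : hgt X = hgt X.dropLast + 1 := by
    conv_lhs => rw [hdec]
    simp [hgt]
    ring
  simp only [zero_add] at this
  omega

/-- primeBlocks of Dyck components stays nonnegative and has height the sum of lifts -/
lemma primeBlocks_facts {l : List (ℕ × List Bool)} (h : ∀ p ∈ l, isDyck p.2 = true) :
    above 0 (primeBlocks l) ∧ hgt (primeBlocks l) = ((l.map fun p => p.1).sum : ℤ) := by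
  induction l with
  | nil => constructor <;> simp [primeBlocks, above]
  | cons p l ih =>
    have hp := isDyck_iff.mp (h p (by simp))
    obtain ⟨ih1, ih2⟩ := ih (fun q hq => h q (by simp [hq]))
    have hpb : primeBlocks (p :: l) = (List.replicate p.1 true ++ p.2) ++ primeBlocks l := by
      simp [primeBlocks]
    rw [hpb]
    constructor
    · rw [above_append, above_append]
      refine ⟨⟨above_replicate_true le_rfl _, above_mono ?_ hp.1⟩, above_mono ?_ ih1⟩
      · rw [hgt_replicate_true]; positivity
      · rw [hgt_append, hgt_replicate_true, hp.2]; positivity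
    · simp [hp.2, ih2]


lemma singleRises_append {A C : List Bool} (hA : SingleRises A) (hC : SingleRises C)
    (h : A.getLast? ≠ some true ∨ C.head? ≠ some true) : SingleRises (A ++ C) := by
  intro i
  rintro ⟨h1, h2⟩
  rcases lt_or_ge (i+1) A.length with hi | hi
  · rw [List.getElem?_append_left (by omega)] at h1
    rw [List.getElem?_append_left hi] at h2
    exact hA i ⟨h1, h2⟩
  · rcases lt_or_ge i A.length with hi' | hi'
    · -- i = A.length - 1, i+1 = A.length
      have hAi : i = A.length - 1 := by omega
      rw [List.getElem?_append_left hi'] at h1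
      rw [List.getElem?_append_right hi] at h2
      have hil : i + 1 - A.length = 0 := by omega
      rw [hil] at h2
      rcases h with h | h
      · apply h
        rw [List.getLast?_eq_getElem?, ← hAi]
        exact h1
      · apply h
        rw [List.head?_eq_getElem?]
        exact h2
    · rw [List.getElem?_append_right hi'] at h1
      rw [List.getElem?_append_right (by omega)] at h2
      have : i + 1 - A.length = (i - A.length) + 1 := by omega
      rw [this] at h2
      exact hC (i - A.length) ⟨h1, h2⟩

lemma singleRises_replicate_false (m : ℕ) : SingleRises (List.replicate m false) := by
  intro i
  rintro ⟨h1, -⟩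
  rw [List.getElem?_replicate] at h1
  split at h1 <;> simp_all

lemma singleRises_single (a : Bool) : SingleRises [a] := by
  intro i
  rintro ⟨h1, h2⟩
  match i with
  | 0 => simp at h2
  | (n+1) => simp at h1

lemma singleRises_tail {R : List Bool} (hR : SingleRises R) : SingleRises R.tail := by
  intro i
  rintro ⟨h1, h2⟩
  rw [List.getElem?_tail] at h1 h2
  exact hR (i+1) ⟨h1, h2⟩

lemma getLast?_sorted_max : ∀ {l : List ℕ} {a : ℕ}, l.Pairwise (· < ·) → a ∈ l →
    (∀ b ∈ l, b ≤ a) → l.getLast? = some a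
  | [], a, _, ha, _ => by simp at ha
  | [x], a, _, ha, hmax => by
      simp at ha ⊢; omega
  | x :: y :: xs, a, hs, ha, hmax => by
      rw [List.getLast?_cons_cons]
      refine getLast?_sorted_max (List.Pairwise.of_cons hs) ?_ ?_
      · rcases List.mem_cons.mp ha with rfl | h
        · exfalso
          have h1 := (List.pairwise_cons.mp hs).1 y (by simp)
          have h2 := hmax y (by simp)
          omega
        · exact h
      · intro b hb
        exact hmax b (by simp [hb])

lemma ldr_eq_of_split (X Z : List Bool) (hZ : SingleRises Z) (hZh : Z.head? ≠ some true) :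
    ldr (X ++ [true, true] ++ Z) = X.count true + 1 := by
  set E := X ++ [true, true] ++ Z with hE
  have hlen : E.length = X.length + 2 + Z.length := by simp [hE]; omega
  have hp : E[X.length]? = some true := by
    rw [hE, List.append_assoc, List.getElem?_append_right le_rfl]
    simp
  have hp2 : E[X.length + 1]? = some true := by
    rw [hE, List.append_assoc, List.getElem?_append_right (by omega)]
    have : X.length + 1 - X.length = 1 := by omega
    rw [this]
    simp
  have hmem : X.length ∈ (List.range E.length).filter fun i =>
      (E[i]? == some true) && (E[i+1]? == some true) := by
    rw [List.mem_filter, List.mem_range]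
    refine ⟨by omega, ?_⟩
    simp [hp, hp2]
  have hmax : ∀ j ∈ (List.range E.length).filter fun i =>
      (E[i]? == some true) && (E[i+1]? == some true), j ≤ X.length := by
    intro j hj
    rw [List.mem_filter, List.mem_range, Bool.and_eq_true, beq_iff_eq, beq_iff_eq] at hj
    obtain ⟨hjl, hj1, hj2⟩ := hj
    by_contra hcon
    push_neg at hcon
    rcases Nat.lt_or_ge j (X.length + 2) with hj' | hj'
    · -- j = X.length + 1 : E[j+1]? = Z[0]?
      have : j = X.length + 1 := by omega
      subst this
      rw [hE, List.append_assoc, List.getElem?_append_right (by omega)] at hj2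
      have h2 : X.length + 1 + 1 - X.length = 2 := by omega
      rw [h2] at hj2
      have : ([true, true] ++ Z)[2]? = Z[0]? := by
        rw [List.getElem?_append_right (by simp)]
        simp
      rw [this, ← List.head?_eq_getElem?] at hj2
      exact hZh hj2
    · -- both in Z
      rw [hE, List.append_assoc, List.getElem?_append_right (by omega)] at hj1 hj2
      have e1 : ([true,true] ++ Z)[j - X.length]? = Z[j - X.length - 2]? := by
        rw [List.getElem?_append_right (by simp; omega)]
        rfl
      have e2 : ([true,true] ++ Z)[j + 1 - X.length]? = Z[(j - X.length - 2) + 1]? := by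
        rw [List.getElem?_append_right (by simp; omega)]
        congr 1
        simp
        omega
      rw [e1] at hj1
      rw [e2] at hj2
      exact hZ _ ⟨hj1, hj2⟩
  have hsorted : ((List.range E.length).filter fun i =>
      (E[i]? == some true) && (E[i+1]? == some true)).Pairwise (· < ·) :=
    (List.pairwise_lt_range).sublist (List.filter_sublist)
  have hgl : ((List.range E.length).filter fun i =>
      (E[i]? == some true) && (E[i+1]? == some true)).getLast? = some X.length :=
    getLast?_sorted_max hsorted hmem hmax
  unfold ldr
  rw [hgl]
  have ht : E.take (X.length + 1) = X ++ [true] := by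
    rw [hE, List.append_assoc, take_append_ge (by omega)]
    have : X.length + 1 - X.length = 1 := by omega
    rw [this]
    rfl
  show (E.take (X.length + 1)).count true = X.count true + 1
  rw [ht]
  simp [List.count_append]

end StmtAux


open StmtAux in
/-- Case (3) of the map `φ`: if `n₁ = ∅` but some `nᵢ` with `i ≥ 2` is
nonempty, let `m` be the final maximal run of north steps of `Q` minus one
step, and `Q'` the path `Q` with `n₀`, `Q₁` and `m` erased; then
`φ(D) = P Q₁ m Q' n₀ R` is a Dyck path of the same semilength with one more
return and `ldr` one larger.  Here `primeBlocks rest = B ++ Nʳ ++ Eˢ` with `B`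
not ending in a north step exhibits the final run of `Q`. -/
theorem stmt8 (n : ℕ) (D P Q R : List Bool) (n0 : ℕ) (Q1 : List Bool)
    (rest : List (ℕ × List Bool)) (B : List Bool) (r s : ℕ)
    (hD : D ∈ dyckPaths n) (h1 : ¬ EndsSingleEast D) (h2 : ldr D < n - 1)
    (hsplit : D = P ++ Q ++ R)
    (hR : SingleRises R) (hRh : R = [] ∨ R.head? = some true)
    (hQl : Q.getLast? = some false)
    (hprime : IsPrimeDyck (Q ++ R))
    (hmax : ∀ P' Q' R' : List Bool, D = P' ++ Q' ++ R' → SingleRises R' →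
      (R' = [] ∨ R'.head? = some true) → Q'.getLast? = some false →
      IsPrimeDyck (Q' ++ R') → R'.length ≤ R.length)
    (hdecomp : Q = primeBlocks ((n0, Q1) :: rest))
    (hQ1 : IsPrimeDyck Q1) (hprimes : ∀ p ∈ rest, IsPrimeDyck p.2)
    (hn0 : 1 ≤ n0)
    (hcase : rest ≠ [] ∧ (rest.headI).1 = 0 ∧ ∃ p ∈ rest.tail, p.1 ≠ 0)
    (hrun : primeBlocks rest =
      B ++ List.replicate r true ++ List.replicate s false)
    (hB : B.getLast? ≠ some true) (hr : 1 ≤ r) (hs : 1 ≤ s) :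
    (P ++ Q1 ++ List.replicate (r - 1) true ++
        (B ++ [true] ++ List.replicate s false) ++
        List.replicate n0 true ++ R) ∈ dyckPaths n ∧
    returns (P ++ Q1 ++ List.replicate (r - 1) true ++
        (B ++ [true] ++ List.replicate s false) ++
        List.replicate n0 true ++ R) = returns D + 1 ∧
    ldr (P ++ Q1 ++ List.replicate (r - 1) true ++
        (B ++ [true] ++ List.replicate s false) ++
        List.replicate n0 true ++ R) = ldr D + 1 := by
  classical
  -- unpack membership
  rw [dyckPaths, List.mem_toFinset, List.mem_filter, List.mem_permutations] at hD
  obtain ⟨hperm, hDdyck⟩ := hD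
  have hcount_t : D.count true = n := by
    rw [hperm.count_eq]; simp [List.count_append, List.count_replicate]
  obtain ⟨hDab, hDh⟩ := isDyck_iff.mp hDdyck
  obtain ⟨hQRdyck, hQRne, hQRret⟩ := hprime
  obtain ⟨hQRab, hQRh⟩ := isDyck_iff.mp hQRdyck
  obtain ⟨hQ1dyck, hQ1ne, hQ1ret⟩ := hQ1
  obtain ⟨hQ1ab, hQ1h⟩ := isDyck_iff.mp hQ1dyck
  -- P is Dyck
  have hsplit' : D = P ++ (Q ++ R) := by rw [hsplit, List.append_assoc]
  have hPQR : above 0 P ∧ above (0 + hgt P) (Q ++ R) := above_append.mp (by rw [← hsplit']; exact hDab)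
  obtain ⟨hPab, -⟩ := hPQR
  have hPh : hgt P = 0 := by
    have h1 : hgt D = hgt P + hgt (Q ++ R) := by rw [hsplit']; simp
    rw [hDh, hQRh] at h1
    omega
  -- primeBlocks facts
  obtain ⟨hpbab, hpbh⟩ := primeBlocks_facts (fun p hp => (hprimes p hp).1)
  set σn : ℕ := (rest.map fun p => p.1).sum with hσdef
  have hσ1 : 1 ≤ σn := by
    obtain ⟨-, -, p, hp, hp1⟩ := hcase
    have hpr : p ∈ rest := List.mem_of_mem_tail hp
    have hle : p.1 ≤ σn := List.single_le_sum (fun x _ => Nat.zero_le x) _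
      (List.mem_map_of_mem (f := fun q => q.1) hpr)
    omega
  -- Q expansion
  have hQeq : Q = List.replicate n0 true ++ (Q1 ++ primeBlocks rest) := by
    rw [hdecomp]; simp [primeBlocks]
  have hσcast : (List.map (fun p => (p.1:ℤ)) rest).sum = (σn:ℤ) := by
    rw [hσdef, Nat.cast_list_sum, List.map_map]
    rfl
  have hpbh' : hgt (primeBlocks rest) = (σn : ℤ) := by rw [hpbh, ← hσcast]
  have hQh : hgt Q = (n0 : ℤ) + σn := by
    rw [hQeq]; simp [hQ1h, hpbh']
  -- B facts
  have hBab : above 0 B := by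
    have := hpbab
    rw [hrun, List.append_assoc] at this
    exact (above_append.mp this).1
  have hBh : hgt B = (σn : ℤ) + s - r := by
    have := hpbh'
    rw [hrun] at this
    simp at this
    omega
  -- R facts
  have hRab : above (0 + hgt Q) R := (above_append.mp (by exact hQRab)).2
  have hRhgt : hgt R = -((n0 : ℤ) + σn) := by
    have : hgt Q + hgt R = 0 := by rw [← hgt_append, hQRh]
    omega
  -- full expansion of D
  have hDfull : D = P ++ (List.replicate n0 true ++ (Q1 ++ (B ++ (List.replicate r true ++
      (List.replicate s false ++ R))))) := by
    rw [hsplit, hQeq, hrun]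
    simp [List.append_assoc]
  -- r ≥ 2
  have hr2 : 2 ≤ r := by
    by_contra hcon
    have hr1 : r = 1 := by omega
    subst hr1
    have hD1 : D = P ++ (List.replicate n0 true ++ (Q1 ++ B)) ++
        ([true] ++ (List.replicate s false ++ R)) := by
      rw [hDfull]
      simp [List.append_assoc]
    have hsr : SingleRises ([true] ++ (List.replicate s false ++ R)) := by
      apply singleRises_append (singleRises_single true)
      · apply singleRises_append (singleRises_replicate_false s) hR
        left
        rw [List.getLast?_eq_getElem?, List.length_replicate, List.getElem?_replicate]
        have : s - 1 < s := by omega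
        simp [this]
      · right
        rw [List.head?_eq_getElem?, List.getElem?_append_left (by simp; omega),
          List.getElem?_replicate]
        simp [hs]
    have hhd : ([true] ++ (List.replicate s false ++ R)) = [] ∨
        ([true] ++ (List.replicate s false ++ R)).head? = some true := by
      right; rfl
    have hgl : (List.replicate n0 true ++ (Q1 ++ B)).getLast? = some false := by
      rcases List.eq_nil_or_concat B with hB0 | ⟨B', b, hB'⟩
      · rw [hB0, List.append_nil]
        rw [List.getLast?_append_of_ne_nil _ hQ1ne]
        exact dyck_ends_false hQ1ab hQ1h hQ1ne
      · have hBne : B ≠ [] := by rw [hB']; simp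
        have hQBne : Q1 ++ B ≠ [] := by simp [hBne]
        rw [List.getLast?_append_of_ne_nil _ hQBne, List.getLast?_append_of_ne_nil _ hBne]
        rw [hB', List.concat_eq_append, List.getLast?_concat] at hB ⊢
        cases b
        · rfl
        · exact absurd rfl hB
    have hpr : IsPrimeDyck ((List.replicate n0 true ++ (Q1 ++ B)) ++
        ([true] ++ (List.replicate s false ++ R))) := by
      have he : (List.replicate n0 true ++ (Q1 ++ B)) ++
          ([true] ++ (List.replicate s false ++ R)) = Q ++ R := by
        rw [hQeq, hrun]
        simp [List.append_assoc]
      rw [he]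
      exact ⟨hQRdyck, hQRne, hQRret⟩
    have := hmax P (List.replicate n0 true ++ (Q1 ++ B))
      ([true] ++ (List.replicate s false ++ R)) hD1 hsr hhd hgl hpr
    simp [List.length_append] at this
  -- R nonempty
  have hRne : R ≠ [] := by
    intro hR0
    have hDsp : D = (P ++ (List.replicate n0 true ++ (Q1 ++ (B ++ List.replicate (r-2) true))))
        ++ [true, true] ++ List.replicate s false := by
      rw [hDfull, hR0]
      have : List.replicate r true = List.replicate (r-2) true ++ [true, true] := by
        rw [show r = (r-2) + 2 by omega, List.replicate_add]
        rfl
      rw [this]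
      simp [List.append_assoc]
    have hldrD : ldr D = (P ++ (List.replicate n0 true ++ (Q1 ++ (B ++
        List.replicate (r-2) true)))).count true + 1 := by
      rw [hDsp]
      apply ldr_eq_of_split
      · exact singleRises_replicate_false s
      · rw [List.head?_eq_getElem?, List.getElem?_replicate]
        simp [hs]
    have hcnt : n = (P ++ (List.replicate n0 true ++ (Q1 ++ (B ++
        List.replicate (r-2) true)))).count true + 2 := by
      rw [← hcount_t]
      conv_lhs => rw [hDsp]
      simp [List.count_append, List.count_replicate]
      omega
    rw [hldrD] at h2
    omega
  -- R = true :: tail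
  obtain ⟨Rt, hRt⟩ : ∃ Rt, R = true :: Rt := by
    rcases hRh with h0 | h0
    · exact absurd h0 hRne
    · cases hRR : R with
      | nil => exact absurd hRR hRne
      | cons a tl =>
        rw [hRR] at h0
        simp at h0
        exact ⟨tl, by rw [h0]⟩
  -- hgt facts for atoms
  have hgtTr1 : hgt (List.replicate (r-1) true) = ((r-1 : ℕ) : ℤ) := hgt_replicate_true _
  have hgtTn0 : hgt (List.replicate n0 true) = (n0 : ℤ) := hgt_replicate_true _
  have hgtFs : hgt (List.replicate s false) = -(s : ℤ) := hgt_replicate_false _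
  have hgtT1 : hgt [true] = 1 := by decide
  have hlastR : R.getLast? = some false := by
    have := dyck_ends_false hQRab hQRh hQRne
    rwa [List.getLast?_append_of_ne_nil _ hRne] at this
  have hretD : returns D = returns P + 1 := by
    rw [hsplit', returns_eq, retsAux_append, hPh, add_zero, ← returns_eq, ← returns_eq, hQRret]
  have hEassoc : (P ++ Q1 ++ List.replicate (r - 1) true ++
        (B ++ [true] ++ List.replicate s false) ++
        List.replicate n0 true ++ R) =
      P ++ (Q1 ++ (List.replicate (r-1) true ++ (B ++ ([true] ++ (List.replicate s false ++
        (List.replicate n0 true ++ R)))))) := by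
    simp [List.append_assoc]
  rw [hEassoc]
  refine ⟨?_, ?_, ?_⟩
  · -- membership
    rw [dyckPaths, List.mem_toFinset, List.mem_filter, List.mem_permutations]
    constructor
    · refine List.Perm.trans (List.perm_iff_count.mpr fun b => ?_) hperm
      conv_rhs => rw [hDfull]
      cases b <;> simp [List.count_append, List.count_replicate] <;> omega
    · rw [isDyck_iff]
      constructor
      · refine above_append.mpr ⟨hPab, ?_⟩
        refine above_append.mpr ⟨above_mono (by omega) hQ1ab, ?_⟩
        refine above_append.mpr ⟨above_replicate_true (by omega) _, ?_⟩
        refine above_append.mpr ⟨above_mono (by omega) hBab, ?_⟩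
        refine above_append.mpr ⟨?_, ?_⟩
        · rw [show [true] = List.replicate 1 true from rfl]
          exact above_replicate_true (by omega) 1
        refine above_append.mpr ⟨above_replicate_false (by omega), ?_⟩
        refine above_append.mpr ⟨above_replicate_true (by omega) _, ?_⟩
        exact above_mono (by omega) hRab
      · simp only [hgt_append, hgtTr1, hgtTn0, hgtFs, hgtT1]
        omega
  · -- returns
    rw [returns_eq, retsAux_append, retsAux_append, retsAux_append, retsAux_append,
      retsAux_append, retsAux_append, retsAux_append]
    have e2 : retsAux (0 + hgt P) Q1 = 1 := by
      rw [show (0 : ℤ) + hgt P = 0 by omega, ← returns_eq, hQ1ret]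
    have e3 : retsAux (0 + hgt P + hgt Q1) (List.replicate (r-1) true) = 0 :=
      retsAux_replicate_true _ _
    have e4 : retsAux (0 + hgt P + hgt Q1 + hgt (List.replicate (r-1) true)) B = 0 := by
      apply retsAux_eq_zero
      intro k hk1 hk2
      have hb := hBab k
      omega
    have e5 : retsAux (0 + hgt P + hgt Q1 + hgt (List.replicate (r-1) true) + hgt B)
        [true] = 0 := by
      apply retsAux_eq_zero
      intro k hk1 hk2
      simp only [List.length_cons, List.length_nil] at hk2
      have hk : k = 1 := by omega
      subst hk
      rw [show List.take 1 [true] = [true] from rfl, hgtT1]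
      omega
    have e6 : retsAux (0 + hgt P + hgt Q1 + hgt (List.replicate (r-1) true) + hgt B +
        hgt [true]) (List.replicate s false) = 0 := by
      apply retsAux_eq_zero
      intro k hk1 hk2
      rw [List.length_replicate] at hk2
      rw [List.take_replicate, hgt_replicate_false]
      have : min k s = k := by omega
      rw [this]
      omega
    have e7 : retsAux (0 + hgt P + hgt Q1 + hgt (List.replicate (r-1) true) + hgt B +
        hgt [true] + hgt (List.replicate s false)) (List.replicate n0 true) = 0 :=
      retsAux_replicate_true _ _
    have e8 : retsAux (0 + hgt P + hgt Q1 + hgt (List.replicate (r-1) true) + hgt B +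
        hgt [true] + hgt (List.replicate s false) + hgt (List.replicate n0 true)) R = 1 := by
      have h1 : retsAux 0 Q + retsAux (0 + hgt Q) R = 1 := by
        rw [← retsAux_append, ← returns_eq]
        exact hQRret
      have h2 : 1 ≤ retsAux (0 + hgt Q) R := one_le_retsAux hRne hlastR (by omega)
      have h3 : retsAux (0 + hgt Q) R = 1 := by omega
      rw [show (0 + hgt P + hgt Q1 + hgt (List.replicate (r-1) true) + hgt B +
        hgt [true] + hgt (List.replicate s false) + hgt (List.replicate n0 true)) =
        0 + hgt Q by omega]
      exact h3
    rw [e2, e3, e4, e5, e6, e7, e8, ← returns_eq, hretD]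
  · -- ldr
    have hDsp2 : D = (P ++ (List.replicate n0 true ++ (Q1 ++ (B ++ List.replicate (r-2) true))))
        ++ [true, true] ++ (List.replicate s false ++ R) := by
      rw [hDfull, show List.replicate r true = List.replicate (r-2) true ++ [true, true] from by
        rw [show r = (r-2) + 2 by omega, List.replicate_add]; rfl]
      simp [List.append_assoc]
    have hldrD : ldr D = (P ++ (List.replicate n0 true ++ (Q1 ++ (B ++
        List.replicate (r-2) true)))).count true + 1 := by
      rw [hDsp2]
      apply ldr_eq_of_split
      · apply singleRises_append (singleRises_replicate_false s) hR
        left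
        rw [List.getLast?_eq_getElem?, List.length_replicate, List.getElem?_replicate]
        have hlt : s - 1 < s := by omega
        simp [hlt]
      · rw [List.head?_eq_getElem?, List.getElem?_append_left (by rw [List.length_replicate]; omega),
          List.getElem?_replicate]
        simp [hs]
    have hEsp : P ++ (Q1 ++ (List.replicate (r-1) true ++ (B ++ ([true] ++ (List.replicate s false ++
          (List.replicate n0 true ++ R)))))) =
        (P ++ (Q1 ++ (List.replicate (r-1) true ++ (B ++ ([true] ++ (List.replicate s false ++
          List.replicate (n0-1) true)))))) ++ [true, true] ++ Rt := by
      rw [hRt, show List.replicate n0 true = List.replicate (n0-1) true ++ [true] from by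
        rw [show n0 = (n0-1) + 1 by omega, List.replicate_add]; rfl]
      simp [List.append_assoc]
    have hsrRt : SingleRises Rt := by
      have := singleRises_tail hR
      rwa [hRt] at this
    have hRthd : Rt.head? ≠ some true := by
      intro hcon
      apply hR 0
      constructor
      · rw [hRt]; simp
      · rw [hRt]
        rw [List.head?_eq_getElem?] at hcon
        simpa using hcon
    have hldrE : ldr (P ++ (Q1 ++ (List.replicate (r-1) true ++ (B ++ ([true] ++
        (List.replicate s false ++ (List.replicate n0 true ++ R))))))) =
        (P ++ (Q1 ++ (List.replicate (r-1) true ++ (B ++ ([true] ++ (List.replicate s false ++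
          List.replicate (n0-1) true)))))).count true + 1 := by
      rw [hEsp]
      exact ldr_eq_of_split _ _ hsrRt hRthd
    rw [hldrE, hldrD]
    simp [List.count_append, List.count_replicate]
    omega
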